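/- For every b with √2(4-π)/(π-2√2) < b < 4, the limit as x → 0⁺ of (f_b(x) - arcsin(x))/x³ equals (4-b)/(24(2+b)), which is positive, where f_b(x) = (b+2)(sqrt(1+x) - sqrt(1-x))/(b + sqrt(1+x) + sqrt(1-x)). -/

import Mathlib

noncomputable def f (β x : ℝ) : ℝ :=
  (β + 2) * (Real.sqrt (1 + x) - Real.sqrt (1 - x)) /
    (β + Real.sqrt (1 + x) + Real.sqrt (1 - x))

lemma key (b x : ℝ) (hb : 0 < b) (hx : x ∈ Set.Ioo (0:ℝ) 1) :
    (f b x - x)/x^3 =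
      2*(b+2+Real.sqrt (1+x)+Real.sqrt (1-x)) /
      ((1+Real.sqrt (1-x^2))*(2+Real.sqrt (1+x)+Real.sqrt (1-x))*
        ((Real.sqrt (1+x)+Real.sqrt (1-x))*(b+Real.sqrt (1+x)+Real.sqrt (1-x)))) := by
  obtain ⟨hx0, hx1⟩ := hx
  have hu : Real.sqrt (1 - x^2) = Real.sqrt (1+x) * Real.sqrt (1-x) := by
    rw [show (1:ℝ) - x^2 = (1+x)*(1-x) by ring, Real.sqrt_mul (by linarith)]
  rw [hu]
  unfold f
  set s := Real.sqrt (1+x) with hs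
  set t := Real.sqrt (1-x) with ht
  have hs0 : 0 < s := Real.sqrt_pos.2 (by linarith)
  have ht0 : 0 < t := Real.sqrt_pos.2 (by linarith)
  have hs2 : s^2 = 1 + x := Real.sq_sqrt (by linarith)
  have ht2 : t^2 = 1 - x := Real.sq_sqrt (by linarith)
  have h1 : (0:ℝ) < 1 + s*t := by positivity
  have h2 : (0:ℝ) < 2 + s + t := by positivity
  have h3 : (0:ℝ) < s + t := by positivity
  have h4 : (0:ℝ) < b + s + t := by positivity
  field_simp
  linear_combination ((2) + (-4)*x + (4)*x^2 + (1)*t + (-2)*t*x + (2)*t*x^2 + (2)*t^2 + (1)*t^3 + (1)*s + (-2)*s*x + (2)*s*x^2 + (2)*s*t + (2)*s*t^2 + (2)*s*t^3 + (1)*s*t^4 + (-4)*s^2 + (4)*s^2*x + (-1)*s^2*t + (2)*s^2*t*x + (4)*s^2*t^2 + (3)*s^2*t^3 + (-2)*s^3 + (2)*s^3*x + (2)*s^3*t^2 + (1)*b + (-2)*b*x + (2)*b*x^2 + (1)*b*t + (1)*b*t^2 + (1)*b*s + (1)*b*s*t + (1)*b*s*t^2 + (1)*b*s*t^3 + (-2)*b*s^2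 + (2)*b*s^2*x + (1)*b*s^2*t + (2)*b*s^2*t^2) * hs2 + ((-2) + (-1)*t + (-1)*s + (-2)*s*t + (-1)*s*t^2 + (2)*s^2 + (1)*s^3 + (-2)*s^3*t + (-1)*s^3*t^2 + (-4)*s^4 + (-3)*s^4*t + (-2)*s^5 + (-1)*b + (-1)*b*t + (-1)*b*s + (-1)*b*s*t + (-1)*b*s*t^2 + (1)*b*s^2 + (-1)*b*s^2*t + (-1)*b*s^3*t + (-2)*b*s^4) * ht2

lemma arcsin_lim : Filter.Tendsto (fun x : ℝ => (Real.arcsin x - x) / x ^ 3)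
    (nhdsWithin 0 (Set.Ioi 0)) (nhds (1/6)) := by
  have hmem : Set.Ioo (0:ℝ) (1/2) ∈ nhdsWithin (0:ℝ) (Set.Ioi 0) :=
    Ioo_mem_nhdsGT (by norm_num)
  apply HasDerivAt.lhopital_zero_right_on_Ioo (a := 0) (b := 1/2)
    (f' := fun x => 1 / Real.sqrt (1 - x^2) - 1) (g' := fun x => 3 * x^2)
    (by norm_num)
  · intro x hx
    have h := (Real.hasDerivAt_arcsin (by nlinarith [hx.1, hx.2] : x ≠ -1)
      (by nlinarith [hx.1, hx.2] : x ≠ 1)).sub (hasDerivAt_id' x)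
    exact h
  · intro x hx
    simpa using hasDerivAt_pow 3 x
  · intro x hx
    have := hx.1
    positivity
  · have : Filter.Tendsto (fun x : ℝ => Real.arcsin x - x) (nhds 0) (nhds 0) := by
      have := (Real.continuous_arcsin.sub continuous_id').tendsto 0
      convert this using 2
      · rfl
      · show (0:ℝ) = Real.arcsin 0 - 0
        rw [Real.arcsin_zero, sub_zero]
    exact this.mono_left nhdsWithin_le_nhds
  · have : Filter.Tendsto (fun x : ℝ => x ^ 3) (nhds (0:ℝ)) (nhds 0) := by
      have := (continuous_pow 3).tendsto (0:ℝ)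
      simpa using this
    exact this.mono_left nhdsWithin_le_nhds
  · -- ratio of derivatives
    have hG : Filter.Tendsto
        (fun x : ℝ => 1 / (3 * Real.sqrt (1-x^2) * (1 + Real.sqrt (1-x^2))))
        (nhdsWithin 0 (Set.Ioi 0)) (nhds (1/6)) := by
      have hc : ContinuousAt
          (fun x : ℝ => 1 / (3 * Real.sqrt (1-x^2) * (1 + Real.sqrt (1-x^2)))) 0 := by
        apply ContinuousAt.div continuousAt_const
        · fun_prop
        · norm_num
      have := hc.tendsto.mono_left (nhdsWithin_le_nhds (s := Set.Ioi (0:ℝ)))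
      convert this using 2
      norm_num [Real.sqrt_one]
    apply hG.congr'
    filter_upwards [hmem] with x hx
    obtain ⟨hx0, hx1⟩ := hx
    have hx2 : (0:ℝ) < 1 - x^2 := by nlinarith
    have hu0 : 0 < Real.sqrt (1 - x^2) := Real.sqrt_pos.2 hx2
    have hu2 : Real.sqrt (1-x^2)^2 = 1 - x^2 := Real.sq_sqrt (le_of_lt hx2)
    set u := Real.sqrt (1-x^2)
    field_simp
    linear_combination hu2

theorem stmt_16 (b : ℝ)
    (hb₁ : Real.sqrt 2 * (4 - Real.pi) / (Real.pi - 2 * Real.sqrt 2) < b) (hb₂ : b < 4) :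
    Filter.Tendsto (fun x : ℝ => (f b x - Real.arcsin x) / x ^ 3)
      (nhdsWithin 0 (Set.Ioi 0)) (nhds ((4 - b) / (24 * (2 + b)))) ∧
    0 < (4 - b) / (24 * (2 + b)) := by
  have hs2 : Real.sqrt 2 < 1.5 := by
    rw [show (1.5:ℝ) = 1.5 from rfl]
    rw [Real.sqrt_lt' (by norm_num)]
    norm_num
  have hpi4 : Real.pi < 4 := by linarith [Real.pi_lt_d2]
  have hpi3 : (3:ℝ) < Real.pi := Real.pi_gt_three
  have hden : 0 < Real.pi - 2 * Real.sqrt 2 := by linarith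
  have hnum : 0 < Real.sqrt 2 * (4 - Real.pi) := by
    have : 0 < Real.sqrt 2 := Real.sqrt_pos.2 (by norm_num)
    nlinarith
  have hb0 : 0 < b := lt_trans (div_pos hnum hden) hb₁
  have hb2 : (0:ℝ) < 2 + b := by linarith
  constructor
  · -- limit of (f b x - x)/x^3
    have hmem : Set.Ioo (0:ℝ) 1 ∈ nhdsWithin (0:ℝ) (Set.Ioi 0) :=
      Ioo_mem_nhdsGT (by norm_num)
    have hfl : Filter.Tendsto (fun x : ℝ => (f b x - x)/x^3)
        (nhdsWithin 0 (Set.Ioi 0)) (nhds ((b+4)/(8*(b+2)))) := by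
      have hG : Filter.Tendsto
          (fun x : ℝ => 2*(b+2+Real.sqrt (1+x)+Real.sqrt (1-x)) /
            ((1+Real.sqrt (1-x^2))*(2+Real.sqrt (1+x)+Real.sqrt (1-x))*
              ((Real.sqrt (1+x)+Real.sqrt (1-x))*(b+Real.sqrt (1+x)+Real.sqrt (1-x)))))
          (nhdsWithin 0 (Set.Ioi 0)) (nhds ((b+4)/(8*(b+2)))) := by
        have hc : ContinuousAt
            (fun x : ℝ => 2*(b+2+Real.sqrt (1+x)+Real.sqrt (1-x)) /
              ((1+Real.sqrt (1-x^2))*(2+Real.sqrt (1+x)+Real.sqrt (1-x))*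
                ((Real.sqrt (1+x)+Real.sqrt (1-x))*(b+Real.sqrt (1+x)+Real.sqrt (1-x))))) 0 := by
          apply ContinuousAt.div
          · fun_prop
          · fun_prop
          · norm_num [Real.sqrt_one]
            nlinarith
        have := hc.tendsto.mono_left (nhdsWithin_le_nhds (s := Set.Ioi (0:ℝ)))
        convert this using 2
        norm_num [Real.sqrt_one]
        field_simp
        ring
      apply hG.congr'
      filter_upwards [hmem] with x hx
      exact (key b x hb0 hx).symm
    have hcomb := hfl.sub arcsin_lim
    have heq : ∀ x : ℝ, (f b x - x)/x^3 - (Real.arcsin x - x)/x^3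
        = (f b x - Real.arcsin x) / x ^ 3 := by
      intro x; ring
    rw [show ((b+4)/(8*(b+2)) - 1/6 : ℝ) = (4 - b) / (24 * (2 + b)) by
      field_simp; ring] at hcomb
    exact Filter.Tendsto.congr heq hcomb
  · apply div_pos (by linarith)
    linarith
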